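/- Let P(λ) = λ(J₁+R₁) + (J₂+R₂) be an n×n complex posH pencil. If λ₀ is a positive real number and x ∈ ℂⁿ satisfies P(λ₀)x = (λ₀(J₁+R₁) + (J₂+R₂))x = 0, then R₁x = 0, R₂x = 0, and (λ₀J₁ + J₂)x = 0. -/

import Mathlib

open Matrix
open scoped ComplexOrder

lemma skew_re_zero {n : ℕ} (J : Matrix (Fin n) (Fin n) ℂ) (hJ : Jᴴ = -J)
    (x : Fin n → ℂ) : (star x ⬝ᵥ J *ᵥ x).re = 0 := by
  have h : star (star x ⬝ᵥ J *ᵥ x) = -(star x ⬝ᵥ J *ᵥ x) := by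
    calc star (star x ⬝ᵥ J *ᵥ x) = star x ⬝ᵥ Jᴴ *ᵥ x := by
          rw [star_dotProduct, star_star, star_mulVec, ← dotProduct_mulVec]
      _ = -(star x ⬝ᵥ J *ᵥ x) := by rw [hJ, Matrix.neg_mulVec, dotProduct_neg]
  have h2 := congrArg Complex.re h
  simp only [Complex.star_def, Complex.conj_re, Complex.neg_re] at h2
  linarith

/-- Lemma 3.4(i): for a posH pencil `P(λ) = λ(J₁+R₁) + (J₂+R₂)`, if `λ₀` is a
positive real number and `P(λ₀)x = 0`, then `R₁x = 0`, `R₂x = 0` and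
`(λ₀J₁ + J₂)x = 0`. -/
theorem posH_real_positive_eigenvector {n : ℕ}
    (J₁ J₂ R₁ R₂ : Matrix (Fin n) (Fin n) ℂ)
    (hJ₁ : J₁ᴴ = -J₁) (hJ₂ : J₂ᴴ = -J₂)
    (hR₁ : R₁.PosSemidef) (hR₂ : R₂.PosSemidef)
    (lam : ℝ) (hlam : 0 < lam) (x : Fin n → ℂ)
    (hx : ((lam : ℂ) • (J₁ + R₁) + (J₂ + R₂)) *ᵥ x = 0) :
    R₁ *ᵥ x = 0 ∧ R₂ *ᵥ x = 0 ∧ ((lam : ℂ) • J₁ + J₂) *ᵥ x = 0 := by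
  have hdot : star x ⬝ᵥ (((lam : ℂ) • (J₁ + R₁) + (J₂ + R₂)) *ᵥ x) = 0 := by
    rw [hx, dotProduct_zero]
  have hexp : (lam : ℂ) * (star x ⬝ᵥ J₁ *ᵥ x) + (lam : ℂ) * (star x ⬝ᵥ R₁ *ᵥ x)
      + ((star x ⬝ᵥ J₂ *ᵥ x) + (star x ⬝ᵥ R₂ *ᵥ x)) = 0 := by
    rw [← hdot]
    simp only [add_mulVec, smul_mulVec, dotProduct_add, dotProduct_smul,
      smul_eq_mul, mul_add]
  have hr1 := (Complex.le_def.mp (hR₁.dotProduct_mulVec_nonneg x))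
  have hr2 := (Complex.le_def.mp (hR₂.dotProduct_mulVec_nonneg x))
  simp only [Complex.zero_re, Complex.zero_im] at hr1 hr2
  have hre := congrArg Complex.re hexp
  simp only [Complex.add_re, Complex.mul_re, Complex.ofReal_re, Complex.ofReal_im,
    Complex.zero_re, zero_mul, sub_zero, skew_re_zero J₁ hJ₁ x,
    skew_re_zero J₂ hJ₂ x, mul_zero] at hre
  have h1re : (star x ⬝ᵥ R₁ *ᵥ x).re = 0 := by nlinarith [hr1.1, hr2.1]
  have h2re : (star x ⬝ᵥ R₂ *ᵥ x).re = 0 := by nlinarith [hr1.1, hr2.1]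
  have hR1x : R₁ *ᵥ x = 0 := by
    rw [← hR₁.dotProduct_mulVec_zero_iff x]
    exact Complex.ext (by simpa using h1re) (by simpa using hr1.2.symm)
  have hR2x : R₂ *ᵥ x = 0 := by
    rw [← hR₂.dotProduct_mulVec_zero_iff x]
    exact Complex.ext (by simpa using h2re) (by simpa using hr2.2.symm)
  refine ⟨hR1x, hR2x, ?_⟩
  have : ((lam : ℂ) • J₁ + J₂) *ᵥ x
      = ((lam : ℂ) • (J₁ + R₁) + (J₂ + R₂)) *ᵥ x - (lam : ℂ) • (R₁ *ᵥ x) - R₂ *ᵥ x := by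
    simp only [add_mulVec, smul_mulVec, smul_add]
    abel
  rw [this, hx, hR1x, hR2x]
  simp
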